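/- If (μ_i)_{i=1}^n are probability measures with μ_1 on ℝ (supported in K_1) and μ_i on ℝ^{r_{i-1}} × ℝ (supported in K_i), satisfying (π_{s_{i-1}})_# μ_i = (F_{i-1})_# μ_{i-1} for i = 2,...,n, then ∫ F_n dμ_n ≥ inf over feasible x of p(x), where p(x) = s_n for the chain s_1 = F_1(x_1), s_i = F_i(s_{i-1}, x_i) and x feasible means x_1 ∈ K_1 and (s_{i-1}, x_i) ∈ K_i for all i. In particular the infimum of the measure problem equals the infimum of the original compositional problem when combined with the Dirac construction. -/

import Mathlib

open MeasureTheory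

/-- The state chain s₁ = F₁(x₁), sᵢ₊₁ = Fᵢ₊₁(sᵢ, xᵢ₊₁) (junk value at index 0). -/
def states (r : ℕ → ℕ) (F1 : ℝ → (Fin (r 1) → ℝ))
    (F : (i : ℕ) → (Fin (r i) → ℝ) → ℝ → (Fin (r (i + 1)) → ℝ))
    (x : ℕ → ℝ) : (i : ℕ) → Fin (r i) → ℝ
  | 0 => fun _ => 0
  | 1 => F1 (x 1)
  | (i + 2) => F (i + 1) (states r F1 F x (i + 1)) (x (i + 2))


/-- The reachable sets of states. -/
def reach (r : ℕ → ℕ) (F1 : ℝ → (Fin (r 1) → ℝ))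
    (F : (i : ℕ) → (Fin (r i) → ℝ) → ℝ → (Fin (r (i + 1)) → ℝ))
    (K1 : Set ℝ) (K : (i : ℕ) → Set ((Fin (r i) → ℝ) × ℝ)) :
    (i : ℕ) → Set (Fin (r i) → ℝ)
  | 0 => ∅
  | 1 => F1 '' K1
  | (i + 2) => (fun p : (Fin (r (i + 1)) → ℝ) × ℝ => F (i + 1) p.1 p.2) ''
      (K (i + 1) ∩ Prod.fst ⁻¹' reach r F1 F K1 K (i + 1))

lemma reach_compact (r : ℕ → ℕ) (F1 : ℝ → (Fin (r 1) → ℝ))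
    (F : (i : ℕ) → (Fin (r i) → ℝ) → ℝ → (Fin (r (i + 1)) → ℝ))
    (K1 : Set ℝ) (K : (i : ℕ) → Set ((Fin (r i) → ℝ) × ℝ))
    (hF1 : Continuous F1)
    (hF : ∀ i, Continuous fun p : (Fin (r i) → ℝ) × ℝ => F i p.1 p.2)
    (hK1 : IsCompact K1) (hK : ∀ i, IsCompact (K i)) :
    ∀ i, IsCompact (reach r F1 F K1 K i)
  | 0 => isCompact_empty
  | 1 => hK1.image hF1
  | (i + 2) => (((hK (i + 1)).inter_right
      ((reach_compact r F1 F K1 K hF1 hF hK1 hK (i + 1)).isClosed.preimage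
        continuous_fst)).image (hF (i + 1)))

lemma states_congr (r : ℕ → ℕ) (F1 : ℝ → (Fin (r 1) → ℝ))
    (F : (i : ℕ) → (Fin (r i) → ℝ) → ℝ → (Fin (r (i + 1)) → ℝ))
    (x y : ℕ → ℝ) :
    ∀ i, (∀ j, 1 ≤ j → j ≤ i → x j = y j) →
      states r F1 F x i = states r F1 F y i
  | 0, _ => rfl
  | 1, h => by simp only [states, h 1 le_rfl le_rfl]
  | (i + 2), h => by
      rw [states, states, states_congr r F1 F x y (i + 1)
        (fun j hj hji => h j hj (by omega)), h (i + 2) (by omega) le_rfl]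

lemma reach_spec (r : ℕ → ℕ) (F1 : ℝ → (Fin (r 1) → ℝ))
    (F : (i : ℕ) → (Fin (r i) → ℝ) → ℝ → (Fin (r (i + 1)) → ℝ))
    (K1 : Set ℝ) (K : (i : ℕ) → Set ((Fin (r i) → ℝ) × ℝ)) :
    ∀ i, ∀ s ∈ reach r F1 F K1 K i,
      ∃ x : ℕ → ℝ, x 1 ∈ K1 ∧
        (∀ j, 1 ≤ j → j + 1 ≤ i →
          ((states r F1 F x j, x (j + 1)) : (Fin (r j) → ℝ) × ℝ) ∈ K j) ∧
        states r F1 F x i = s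
  | 0, s, hs => absurd hs (Set.notMem_empty s)
  | 1, s, hs => by
      obtain ⟨x1, hx1, hfx⟩ := hs
      exact ⟨fun _ => x1, hx1, fun j hj hj1 => by omega, hfx⟩
  | (i + 2), s, hs => by
      obtain ⟨p, ⟨hpK, hpR⟩, hps⟩ := hs
      obtain ⟨x, hx1, hxcon, hxs⟩ := reach_spec r F1 F K1 K (i + 1) p.1 hpR
      refine ⟨Function.update x (i + 2) p.2, ?_, ?_, ?_⟩
      · rwa [Function.update_of_ne (by omega)]
      · intro j hj hj2
        have hx' : states r F1 F (Function.update x (i + 2) p.2) (i + 1)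
            = states r F1 F x (i + 1) :=
          states_congr _ _ _ _ _ _ (fun k hk hki =>
            Function.update_of_ne (by omega) _ _)
        rcases Nat.lt_or_ge j (i + 1) with hlt | hge
        · have hst : states r F1 F (Function.update x (i + 2) p.2) j
              = states r F1 F x j :=
            states_congr _ _ _ _ _ _ (fun k hk hki =>
              Function.update_of_ne (by omega) _ _)
          rw [hst, Function.update_of_ne (by omega)]
          exact hxcon j hj (by omega)
        · have hje : j = i + 1 := by omega
          subst hje
          rw [hx', hxs, Function.update_self]
          exact hpK
      · have hx' : states r F1 F (Function.update x (i + 2) p.2) (i + 1)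
            = states r F1 F x (i + 1) :=
          states_congr _ _ _ _ _ _ (fun k hk hki =>
            Function.update_of_ne (by omega) _ _)
        rw [states, hx', hxs, Function.update_self, ← hps]

/-- any feasible family of measures for the push-forward
(measure-propagation) formulation has objective value ∫ Fₙ dμₙ at least the
infimum of the original compositional problem over feasible x (computed in
EReal). Here μ i, for 1 ≤ i ≤ n−1, is the transition measure on (sᵢ, xᵢ₊₁). -/
theorem stmt_17 (n : ℕ) (hn : 2 ≤ n) (r : ℕ → ℕ) (hrn : r n = 1)
    (F1 : ℝ → (Fin (r 1) → ℝ)) (hF1 : Continuous F1)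
    (F : (i : ℕ) → (Fin (r i) → ℝ) → ℝ → (Fin (r (i + 1)) → ℝ))
    (hF : ∀ i, Continuous fun p : (Fin (r i) → ℝ) × ℝ => F i p.1 p.2)
    (K1 : Set ℝ) (hK1 : IsCompact K1)
    (K : (i : ℕ) → Set ((Fin (r i) → ℝ) × ℝ)) (hK : ∀ i, IsCompact (K i))
    (μ1 : Measure ℝ) [IsProbabilityMeasure μ1]
    (μ : (i : ℕ) → Measure ((Fin (r i) → ℝ) × ℝ))
    (hprob : ∀ i, 1 ≤ i → i + 1 ≤ n → IsProbabilityMeasure (μ i))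
    (hsupp1 : μ1 K1ᶜ = 0)
    (hsupp : ∀ i, 1 ≤ i → i + 1 ≤ n → μ i (K i)ᶜ = 0)
    (hcons1 : (μ 1).map Prod.fst = μ1.map F1)
    (hcons : ∀ i, 1 ≤ i → i + 2 ≤ n →
      (μ (i + 1)).map Prod.fst = (μ i).map fun p => F i p.1 p.2) :
    sInf {v : EReal | ∃ x : ℕ → ℝ, x 1 ∈ K1 ∧
        (∀ i, 1 ≤ i → i + 1 ≤ n →
          ((states r F1 F x i, x (i + 1)) : (Fin (r i) → ℝ) × ℝ) ∈ K i) ∧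
        v = ((states r F1 F x n ⟨0, by omega⟩ : ℝ) : EReal)}
      ≤ ((∫ p, F (n - 1) p.1 p.2
            ⟨0, by rw [Nat.sub_add_cancel (by omega : 1 ≤ n), hrn]; omega⟩
            ∂(μ (n - 1)) : ℝ) : EReal) := by
  obtain ⟨m, rfl⟩ : ∃ m, n = m + 2 := ⟨n - 2, by omega⟩
  set Rch := reach r F1 F K1 K with hRch
  have hRc : ∀ i, IsCompact (Rch i) := reach_compact r F1 F K1 K hF1 hF hK1 hK
  -- a.e. membership in K i ∩ fst ⁻¹' Rch i
  have key : ∀ i, 1 ≤ i → i + 1 ≤ m + 2 →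
      μ i ((K i ∩ Prod.fst ⁻¹' Rch i)ᶜ) = 0 := by
    intro i hi
    induction i, hi using Nat.le_induction with
    | base =>
      intro _
      rw [Set.compl_inter]
      refine le_antisymm (le_trans (measure_union_le _ _) ?_) zero_le
      rw [hsupp 1 le_rfl (by omega)]
      have hmeas : MeasurableSet ((Rch 1)ᶜ) := (hRc 1).isClosed.measurableSet.compl
      have h1 : μ 1 (Prod.fst ⁻¹' (Rch 1)ᶜ) = (μ 1).map Prod.fst ((Rch 1)ᶜ) :=
        (Measure.map_apply measurable_fst hmeas).symm
      rw [Set.preimage_compl] at h1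
      rw [h1, hcons1, Measure.map_apply hF1.measurable hmeas]
      have hsub : F1 ⁻¹' (Rch 1)ᶜ ⊆ K1ᶜ := by
        intro x hx hxK
        exact hx ⟨x, hxK, rfl⟩
      simp only [zero_add]
      exact le_trans (measure_mono hsub) (le_of_eq hsupp1)
    | succ i hi ih =>
      intro h
      have ih' := ih (by omega)
      rw [Set.compl_inter]
      refine le_antisymm (le_trans (measure_union_le _ _) ?_) zero_le
      rw [hsupp (i + 1) (by omega) (by omega)]
      have hmeas : MeasurableSet ((Rch (i + 1))ᶜ) :=
        (hRc (i + 1)).isClosed.measurableSet.compl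
      have h1 : μ (i + 1) (Prod.fst ⁻¹' (Rch (i + 1))ᶜ) =
          (μ (i + 1)).map Prod.fst ((Rch (i + 1))ᶜ) :=
        (Measure.map_apply measurable_fst hmeas).symm
      rw [Set.preimage_compl] at h1
      rw [h1, hcons i hi (by omega),
        Measure.map_apply (hF i).measurable hmeas]
      have hsub : (fun p : (Fin (r i) → ℝ) × ℝ => F i p.1 p.2) ⁻¹' (Rch (i + 1))ᶜ
          ⊆ (K i ∩ Prod.fst ⁻¹' Rch i)ᶜ := by
        intro p hp hpm
        apply hp
        obtain ⟨j, rfl⟩ : ∃ j, i = j + 1 := ⟨i - 1, by omega⟩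
        exact ⟨p, hpm, rfl⟩
      simp only [zero_add]
      exact le_trans (measure_mono hsub) (le_of_eq ih')
  -- the set A
  set A := K (m + 1) ∩ Prod.fst ⁻¹' Rch (m + 1) with hA
  have hAc : IsCompact A := (hK (m + 1)).inter_right
    ((hRc (m + 1)).isClosed.preimage continuous_fst)
  have hA0 : μ (m + 1) Aᶜ = 0 := key (m + 1) (by omega) (by omega)
  haveI : IsProbabilityMeasure (μ (m + 1)) := hprob _ (by omega) (by omega)
  have hAmem : ∀ᵐ p ∂ μ (m + 1), p ∈ A := by
    rw [MeasureTheory.ae_iff]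
    exact hA0
  have hAne : A.Nonempty := by
    by_contra h
    rw [Set.not_nonempty_iff_eq_empty] at h
    rw [h, Set.compl_empty, measure_univ] at hA0
    exact one_ne_zero hA0
  -- the objective function
  have hrm : 0 < r (m + 2) := by rw [hrn]; omega
  set f : (Fin (r (m + 1)) → ℝ) × ℝ → ℝ :=
    fun p => F (m + 1) p.1 p.2 ⟨0, hrm⟩ with hf
  have hfc : Continuous f := (continuous_apply _).comp (hF (m + 1))
  obtain ⟨p0, hp0A, hp0min⟩ := hAc.exists_isMinOn hAne hfc.continuousOn
  obtain ⟨C, hC⟩ := hAc.exists_bound_of_continuousOn hfc.continuousOn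
  have hfi : Integrable f (μ (m + 1)) := by
    refine Integrable.mono' (integrable_const C) hfc.aestronglyMeasurable ?_
    filter_upwards [hAmem] with p hp using hC p hp
  have hint : f p0 ≤ ∫ p, f p ∂ μ (m + 1) := by
    have h0 : ∫ _, f p0 ∂ μ (m + 1) = f p0 := by
      simp [integral_const, measure_univ]
    rw [← h0]
    refine integral_mono_ae (integrable_const _) hfi ?_
    filter_upwards [hAmem] with p hp using hp0min hp
  -- build the feasible point
  obtain ⟨x, hx1, hxcon, hxs⟩ := reach_spec r F1 F K1 K (m + 1) p0.1 hp0A.2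
  set x' := Function.update x (m + 2) p0.2 with hx'
  have hst : states r F1 F x' (m + 1) = p0.1 := by
    rw [← hxs]
    exact states_congr _ _ _ _ _ (m + 1)
      (fun k hk hki => Function.update_of_ne (by omega) _ _)
  have hmem : ((states r F1 F x' (m + 2) ⟨0, hrm⟩ : ℝ) : EReal) ∈
      {v : EReal | ∃ x : ℕ → ℝ, x 1 ∈ K1 ∧
        (∀ i, 1 ≤ i → i + 1 ≤ m + 2 →
          ((states r F1 F x i, x (i + 1)) : (Fin (r i) → ℝ) × ℝ) ∈ K i) ∧
        v = ((states r F1 F x (m + 2) ⟨0, by omega⟩ : ℝ) : EReal)} := by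
    refine ⟨x', ?_, ?_, rfl⟩
    · rwa [hx', Function.update_of_ne (by omega)]
    · intro i hi hi2
      rcases Nat.lt_or_ge i (m + 1) with hlt | hge
      · have hsi : states r F1 F x' i = states r F1 F x i :=
          states_congr _ _ _ _ _ i
            (fun k hk hki => Function.update_of_ne (by omega) _ _)
        rw [hsi, hx', Function.update_of_ne (by omega)]
        exact hxcon i hi (by omega)
      · have hie : i = m + 1 := by omega
        subst hie
        rw [hst, hx', Function.update_self]
        exact hp0A.1
  have hval : states r F1 F x' (m + 2) ⟨0, hrm⟩ = f p0 := by
    rw [states, hst, hx', Function.update_self]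
  refine le_trans (sInf_le hmem) ?_
  rw [hval]
  exact EReal.coe_le_coe_iff.mpr hint
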